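/- The function f(t) = ζ(2t) − 2·3^{-t} is (strictly) decreasing on the interval [log_3(2), 2/3]: for all real s, t with log_3(2) ≤ s < t ≤ 2/3, we have ζ(2s) − 2·3^{-s} > ζ(2t) − 2·3^{-t}. -/

import Mathlib

/-- The real zeta function as the series `∑_{i=1}^∞ i^{-s}` (for `s > 1`). -/
noncomputable def zetaR (s : ℝ) : ℝ := ∑' n : ℕ+, (n : ℝ) ^ (-s)


lemma rpow_lower {a c : ℝ} (ha : 1 ≤ a) (hc : 0 ≤ c) (h : c ^ 3 * a ^ 4 ≤ 1) :
    c ≤ a ^ (-(4 / 3) : ℝ) := by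
  have ha0 : (0:ℝ) < a := lt_of_lt_of_le one_pos ha
  have hx : (a ^ (-(4 / 3) : ℝ)) ^ (3:ℕ) = (a ^ (4:ℕ))⁻¹ := by
    rw [← Real.rpow_natCast (a ^ (-(4 / 3) : ℝ)) 3, ← Real.rpow_mul ha0.le,
      show (-(4 / 3) * ((3:ℕ):ℝ) : ℝ) = -4 by norm_num,
      Real.rpow_neg ha0.le, show (4:ℝ) = ((4:ℕ):ℝ) by norm_num, Real.rpow_natCast]
  have h4 : (0:ℝ) < a ^ (4:ℕ) := by positivity
  refine le_of_pow_le_pow_left₀ (n := 3) (by norm_num) (Real.rpow_nonneg ha0.le _) ?_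
  rw [hx, ← one_div, le_div_iff₀ h4]
  linarith

lemma summable_zetaR {p : ℝ} (hp : 1 < p) : Summable (fun n : ℕ+ => (n : ℝ) ^ (-p)) := by
  have h : Summable (fun n : ℕ => (n : ℝ) ^ (-p)) := by
    rw [Real.summable_nat_rpow]; linarith
  exact h.comp_injective PNat.coe_injective

lemma zeta_sub_ge {p q : ℝ} (hp : 1 < p) (hpq : p ≤ q) :
    ((2:ℝ) ^ (-p) - 2 ^ (-q)) + ((3:ℝ) ^ (-p) - 3 ^ (-q)) + ((4:ℝ) ^ (-p) - 4 ^ (-q))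
      ≤ zetaR p - zetaR q := by
  have hq : 1 < q := lt_of_lt_of_le hp hpq
  have hsp := summable_zetaR hp
  have hsq := summable_zetaR hq
  have hsub : zetaR p - zetaR q = ∑' n : ℕ+, ((n : ℝ) ^ (-p) - (n : ℝ) ^ (-q)) := by
    rw [zetaR, zetaR, ← Summable.tsum_sub hsp hsq]
  rw [hsub]
  have hnn : ∀ n : ℕ+, 0 ≤ (n : ℝ) ^ (-p) - (n : ℝ) ^ (-q) := by
    intro n
    have h1 : (1:ℝ) ≤ (n:ℝ) := by exact_mod_cast n.one_le
    have := Real.rpow_le_rpow_of_exponent_le h1 (neg_le_neg hpq)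
    linarith
  have key := Summable.sum_le_tsum ({2, 3, 4} : Finset ℕ+) (fun n _ => hnn n) (hsp.sub hsq)
  refine le_trans (le_of_eq ?_) key
  rw [show ({2, 3, 4} : Finset ℕ+) = insert 2 (insert 3 {4}) from rfl,
    Finset.sum_insert (by decide), Finset.sum_insert (by decide), Finset.sum_singleton]
  push_cast
  ring

noncomputable def hAux (u : ℝ) : ℝ :=
  (2:ℝ) ^ (-(2 * u)) + (3:ℝ) ^ (-(2 * u)) + (4:ℝ) ^ (-(2 * u)) - 2 * (3:ℝ) ^ (-u)

noncomputable def hAuxD (u : ℝ) : ℝ :=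
  (2:ℝ) ^ (-(2 * u)) * Real.log 2 * (-2) + (3:ℝ) ^ (-(2 * u)) * Real.log 3 * (-2)
    + (4:ℝ) ^ (-(2 * u)) * Real.log 4 * (-2) - 2 * ((3:ℝ) ^ (-u) * Real.log 3 * (-1))

lemma hasDerivAt_two_mul {a : ℝ} (ha : 0 < a) (u : ℝ) :
    HasDerivAt (fun u : ℝ => a ^ (-(2 * u))) (a ^ (-(2 * u)) * Real.log a * (-2)) u := by
  have h1 : HasDerivAt (fun u : ℝ => -(2 * u)) (-2) u := by
    simpa [Pi.neg_def] using ((hasDerivAt_id u).const_mul (2:ℝ)).neg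
  exact (Real.hasStrictDerivAt_const_rpow ha _).hasDerivAt.comp u h1

lemma hasDerivAt_hAux (u : ℝ) : HasDerivAt hAux (hAuxD u) u := by
  have h3 : HasDerivAt (fun u : ℝ => (3:ℝ) ^ (-u)) ((3:ℝ) ^ (-u) * Real.log 3 * (-1)) u := by
    have h1 : HasDerivAt (fun u : ℝ => -u) (-1) u := by simpa [Pi.neg_def] using (hasDerivAt_id u).neg
    exact (Real.hasStrictDerivAt_const_rpow (by norm_num) _).hasDerivAt.comp u h1
  exact (((hasDerivAt_two_mul (by norm_num : (0:ℝ) < 2) u).add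
    (hasDerivAt_two_mul (by norm_num : (0:ℝ) < 3) u)).add
    (hasDerivAt_two_mul (by norm_num : (0:ℝ) < 4) u)).sub (h3.const_mul 2)

lemma hAuxD_neg {u : ℝ} (hu1 : Real.logb 3 2 < u) (hu2 : u < 2 / 3) : hAuxD u < 0 := by
  have hl2 : 0 < Real.log 2 := Real.log_pos (by norm_num)
  have hl3 : 0 < Real.log 3 := Real.log_pos (by norm_num)
  have hl4 : Real.log 4 = 2 * Real.log 2 := by
    rw [show (4:ℝ) = 2 ^ (2:ℕ) by norm_num, Real.log_pow]; push_cast; ring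
  have hl34 : Real.log 3 < 2 * Real.log 2 := by
    rw [← hl4]; exact Real.log_lt_log (by norm_num) (by norm_num)
  -- 3 ^ (-u) < 1 / 2
  have h3u : (3:ℝ) ^ (-u) < 1 / 2 := by
    have h := Real.rpow_lt_rpow_of_exponent_lt (x := 3) (by norm_num) (neg_lt_neg hu1)
    rwa [show (3:ℝ) ^ (-Real.logb 3 2) = 1 / 2 by
      rw [Real.rpow_neg (by norm_num), Real.rpow_logb (by norm_num) (by norm_num) (by norm_num)]
      norm_num] at h
  have hexp : (-(4 / 3) : ℝ) ≤ -(2 * u) := by linarith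
  have h2u : (0.396 : ℝ) ≤ (2:ℝ) ^ (-(2 * u)) :=
    le_trans (rpow_lower (by norm_num) (by norm_num) (by norm_num))
      (Real.rpow_le_rpow_of_exponent_le (by norm_num) hexp)
  have h3u2 : (0.231 : ℝ) ≤ (3:ℝ) ^ (-(2 * u)) :=
    le_trans (rpow_lower (by norm_num) (by norm_num) (by norm_num))
      (Real.rpow_le_rpow_of_exponent_le (by norm_num) hexp)
  have h4u : (0.157 : ℝ) ≤ (4:ℝ) ^ (-(2 * u)) :=
    le_trans (rpow_lower (by norm_num) (by norm_num) (by norm_num))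
      (Real.rpow_le_rpow_of_exponent_le (by norm_num) hexp)
  have m2 := mul_le_mul_of_nonneg_left h2u hl2.le
  have m3 := mul_le_mul_of_nonneg_left h3u2 hl3.le
  have m4 := mul_le_mul_of_nonneg_left h4u (by linarith : (0:ℝ) ≤ Real.log 4)
  have m5 := mul_lt_mul_of_pos_left h3u hl3
  rw [hAuxD]
  nlinarith [m2, m3, m4, m5, hl4, hl34, hl2, hl3]

lemma hAux_strictAntiOn : StrictAntiOn hAux (Set.Icc (Real.logb 3 2) (2 / 3)) := by
  have hd : ∀ u : ℝ, DifferentiableAt ℝ hAux u := fun u => (hasDerivAt_hAux u).differentiableAt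
  refine strictAntiOn_of_deriv_neg (convex_Icc _ _)
    (fun u _ => (hd u).continuousAt.continuousWithinAt) ?_
  intro u hu
  rw [interior_Icc] at hu
  rw [(hasDerivAt_hAux u).deriv]
  exact hAuxD_neg hu.1 hu.2

/-- The function `f(t) = ζ(2t) − 2·3^{-t}` is strictly decreasing on `[log_3 2, 2/3]`. -/
theorem f_strictAnti (s t : ℝ) (hs : Real.logb 3 2 ≤ s) (hst : s < t) (ht : t ≤ 2 / 3) :
    zetaR (2 * t) - 2 * (3 : ℝ) ^ (-t) < zetaR (2 * s) - 2 * (3 : ℝ) ^ (-s) := by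
  have hl3 : 0 < Real.log 3 := Real.log_pos (by norm_num)
  have hlb : (1:ℝ) / 2 < Real.logb 3 2 := by
    rw [Real.logb, lt_div_iff₀ hl3]
    have h4 : Real.log 3 < Real.log 4 := Real.log_lt_log (by norm_num) (by norm_num)
    have : Real.log 4 = 2 * Real.log 2 := by
      rw [show (4:ℝ) = 2 ^ (2:ℕ) by norm_num, Real.log_pow]; push_cast; ring
    linarith
  have hp : 1 < 2 * s := by linarith
  have key := zeta_sub_ge hp (by linarith : 2 * s ≤ 2 * t)
  have hmono := hAux_strictAntiOn ⟨hs, by linarith⟩ ⟨by linarith, ht⟩ hst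
  rw [hAux, hAux] at hmono
  linarith
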